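/- There is a Δ0-definable predicate Im_Pair on U_{max(n1,n2)+2} characterizing the image of the Kuratowski pairing: Im_Pair(a) holds if and only if there exist a1 : U_{n1} and a2 : U_{n2} with Pair(a1,a2) = a; moreover in that case Pair(π̂1(a), π̂2(a)) = a. -/

import Mathlib

/-- Nested relational types. -/
inductive NType : Type
  | U : NType
  | unit : NType
  | prod : NType → NType → NType
  | set : NType → NType

/-- Objects of a nested relational type over a set `α` of Ur-elements. -/
def Obj (α : Type) : NType → Type
  | .U => α
  | .unit => Unit
  | .prod a b => Obj α a × Obj α b
  | .set t => Set (Obj α t)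

/-- Typed de Bruijn variables over a context of types. -/
inductive Var : List NType → NType → Type
  | zero {Γ t} : Var (t :: Γ) t
  | succ {Γ s t} : Var Γ t → Var (s :: Γ) t

/-- Environments: assignments of objects to all variables of a context. -/
def Env (α : Type) (Γ : List NType) : Type := ∀ t, Var Γ t → Obj α t

def Env.nil {α : Type} : Env α [] := fun _ v => nomatch v

def Env.cons {α : Type} {Γ : List NType} {t : NType} (x : Obj α t) (ρ : Env α Γ) :
    Env α (t :: Γ) := fun s v =>
  match v with
  | .zero => x
  | .succ w => ρ s w

/-- Terms: variables, unit, tupling and projections. -/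
inductive Tm : List NType → NType → Type
  | var {Γ t} : Var Γ t → Tm Γ t
  | unit {Γ} : Tm Γ .unit
  | pair {Γ a b} : Tm Γ a → Tm Γ b → Tm Γ (.prod a b)
  | fst {Γ a b} : Tm Γ (.prod a b) → Tm Γ a
  | snd {Γ a b} : Tm Γ (.prod a b) → Tm Γ b

def Tm.eval {α : Type} {Γ : List NType} (ρ : Env α Γ) : ∀ {t}, Tm Γ t → Obj α t
  | _, .var v => ρ _ v
  | _, .unit => (() : Unit)
  | _, .pair a b => ((Tm.eval ρ a, Tm.eval ρ b) : _ × _)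
  | _, .fst (a := a) (b := b) p => (Tm.eval ρ p : Obj α a × Obj α b).1
  | _, .snd (a := a) (b := b) p => (Tm.eval ρ p : Obj α a × Obj α b).2

/-- Δ₀ formulas: (dis)equality of Ur-elements, ⊤, ⊥, ∧, ∨ and bounded quantifiers. -/
inductive Delta0 : List NType → Type
  | eqU {Γ} : Tm Γ .U → Tm Γ .U → Delta0 Γ
  | neU {Γ} : Tm Γ .U → Tm Γ .U → Delta0 Γ
  | tru {Γ} : Delta0 Γ
  | fls {Γ} : Delta0 Γ
  | and {Γ} : Delta0 Γ → Delta0 Γ → Delta0 Γ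
  | or {Γ} : Delta0 Γ → Delta0 Γ → Delta0 Γ
  | all {Γ t} : Tm Γ (.set t) → Delta0 (t :: Γ) → Delta0 Γ
  | ex {Γ t} : Tm Γ (.set t) → Delta0 (t :: Γ) → Delta0 Γ

/-- Satisfaction of a Δ₀ formula in an environment. -/
def Delta0.sat {α : Type} : ∀ {Γ}, Env α Γ → Delta0 Γ → Prop
  | _, ρ, .eqU a b => Tm.eval ρ a = Tm.eval ρ b
  | _, ρ, .neU a b => Tm.eval ρ a ≠ Tm.eval ρ b
  | _, _, .tru => True
  | _, _, .fls => False
  | _, ρ, .and φ ψ => Delta0.sat ρ φ ∧ Delta0.sat ρ ψ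
  | _, ρ, .or φ ψ => Delta0.sat ρ φ ∨ Delta0.sat ρ ψ
  | _, ρ, .all (t := T) s φ =>
      ∀ x : Obj _ T, x ∈ (show Set (Obj _ T) from Tm.eval ρ s) → Delta0.sat (Env.cons x ρ) φ
  | _, ρ, .ex (t := T) s φ =>
      ∃ x : Obj _ T, x ∈ (show Set (Obj _ T) from Tm.eval ρ s) ∧ Delta0.sat (Env.cons x ρ) φ

/-- Nested relational calculus expressions. -/
inductive NRC : List NType → NType → Type
  | var {Γ t} : Var Γ t → NRC Γ t
  | unit {Γ} : NRC Γ .unit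
  | pair {Γ a b} : NRC Γ a → NRC Γ b → NRC Γ (.prod a b)
  | fst {Γ a b} : NRC Γ (.prod a b) → NRC Γ a
  | snd {Γ a b} : NRC Γ (.prod a b) → NRC Γ b
  | sing {Γ t} : NRC Γ t → NRC Γ (.set t)
  | empty {Γ t} : NRC Γ (.set t)
  | union {Γ t} : NRC Γ (.set t) → NRC Γ (.set t) → NRC Γ (.set t)
  | diff {Γ t} : NRC Γ (.set t) → NRC Γ (.set t) → NRC Γ (.set t)
  | bigUnion {Γ a b} : NRC (a :: Γ) (.set b) → NRC Γ (.set a) → NRC Γ (.set b)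

/-- Semantics of NRC expressions. -/
def NRC.eval {α : Type} : ∀ {Γ}, Env α Γ → ∀ {t}, NRC Γ t → Obj α t
  | _, ρ, _, .var v => ρ _ v
  | _, _, _, .unit => (() : Unit)
  | _, ρ, _, .pair a b => ((NRC.eval ρ a, NRC.eval ρ b) : _ × _)
  | _, ρ, _, .fst (a := a) (b := b) p => (NRC.eval ρ p : Obj α a × Obj α b).1
  | _, ρ, _, .snd (a := a) (b := b) p => (NRC.eval ρ p : Obj α a × Obj α b).2
  | _, ρ, _, .sing e => ({NRC.eval ρ e} : Set _)
  | _, _, _, .empty => (∅ : Set _)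
  | _, ρ, _, .union e1 e2 => ((NRC.eval ρ e1 : Set _) ∪ (NRC.eval ρ e2 : Set _) : Set _)
  | _, ρ, _, .diff e1 e2 => ((NRC.eval ρ e1 : Set _) \ (NRC.eval ρ e2 : Set _) : Set _)
  | _, ρ, _, .bigUnion (a := a) (b := b) e2 e1 =>
      show Set (Obj α b) from
        ⋃ x ∈ (show Set (Obj α a) from NRC.eval ρ e1),
          (show Set (Obj α b) from NRC.eval (Env.cons x ρ) e2)

/-- The Boolean type `Set(Unit)`. -/
abbrev NType.bool : NType := .set .unit
/-- Monadic types `U_0 = U`, `U_{n+1} = Set(U_n)`. -/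
def MT : ℕ → NType
  | 0 => .U
  | n + 1 => .set (MT n)

/-- The iterated-singleton embedding `U_n → U_{n+k}`. -/
def upBy {α : Type} {n : ℕ} : ∀ k : ℕ, Obj α (MT n) → Obj α (MT (n + k))
  | 0, x => x
  | k + 1, x => (show Set (Obj α (MT (n + k))) from {upBy k x})

/-- The embedding `↑ : U_n → U_m` for `n ≤ m`. -/
def upTo {α : Type} {n : ℕ} (m : ℕ) (h : n ≤ m) (x : Obj α (MT n)) : Obj α (MT m) :=
  cast (congrArg (fun k => Obj α (MT k)) (Nat.add_sub_cancel' h)) (upBy (m - n) x)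

/-- Kuratowski-style pairing `Pair(a,b) = {{↑a}, {↑a, ↑b}}` on monadic types. -/
def kPair {α : Type} {n1 n2 : ℕ} (a : Obj α (MT n1)) (b : Obj α (MT n2)) :
    Obj α (MT (max n1 n2 + 2)) :=
  show Set (Set (Obj α (MT (max n1 n2)))) from
    { {upTo (max n1 n2) (le_max_left n1 n2) a},
      {upTo (max n1 n2) (le_max_left n1 n2) a, upTo (max n1 n2) (le_max_right n1 n2) b} }

/-- The monadic depth of a nested relational type. -/
def mdepth : NType → ℕ
  | .U => 0
  | .unit => 0
  | .set t => 1 + mdepth t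
  | .prod a b => 2 + max (mdepth a) (mdepth b)

section Aux
variable {α : Type}

/-- Weakening of terms. -/
def Tm.wk {Γ : List NType} {s t : NType} : Tm Γ t → Tm (s :: Γ) t
  | .var v => .var (.succ v)
  | .unit => .unit
  | .pair a b => .pair a.wk b.wk
  | .fst p => .fst p.wk
  | .snd p => .snd p.wk

lemma Tm.eval_wk {Γ : List NType} {s t : NType} (x : Obj α s) (ρ : Env α Γ) (e : Tm Γ t) :
    Tm.eval (Env.cons x ρ) e.wk = Tm.eval ρ e := by
  induction e <;> simp [Tm.wk, Tm.eval, Env.cons, *] <;> rfl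

/-- Δ₀ extensional-equality formula on monadic types. -/
def eqD0 : ∀ (n : ℕ) {Γ : List NType}, Tm Γ (MT n) → Tm Γ (MT n) → Delta0 Γ
  | 0, _, s, t => .eqU s t
  | n+1, _, s, t =>
      .and (.all s (.ex t.wk (eqD0 n (.var .zero) (.var (.succ .zero)))))
           (.all t (.ex s.wk (eqD0 n (.var .zero) (.var (.succ .zero)))))

lemma eqD0_sat : ∀ (n : ℕ) {Γ : List NType} (ρ : Env α Γ) (s t : Tm Γ (MT n)),
    Delta0.sat ρ (eqD0 n s t) ↔ Tm.eval ρ s = Tm.eval ρ t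
  | 0, _, ρ, s, t => Iff.rfl
  | n+1, Γ, ρ, s, t => by
    have wk : ∀ (x : Obj α (MT n)) (r : Tm Γ (MT (n+1))),
        @Tm.eval α _ (Env.cons x ρ) (MT n).set (@Tm.wk Γ (MT n) (MT (n+1)) r) =
          @Tm.eval α Γ ρ (MT n).set r := fun x r => Tm.eval_wk x ρ r
    simp only [eqD0, Delta0.sat, Tm.eval, Tm.eval_wk, wk, Env.cons]
    constructor
    · rintro ⟨h1, h2⟩
      apply Set.Subset.antisymm
      · intro y hy
        obtain ⟨z, hz, e⟩ := h1 y hy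
        have e' : z = y := (eqD0_sat n _ _ _).mp e
        exact e' ▸ hz
      · intro z hz
        obtain ⟨y, hy, e⟩ := h2 z hz
        have e' : y = z := (eqD0_sat n _ _ _).mp e
        exact e' ▸ hy
    · intro h
      erw [h]
      exact ⟨fun y hy => ⟨y, hy, (eqD0_sat n _ _ _).mpr rfl⟩,
             fun y hy => ⟨y, hy, (eqD0_sat n _ _ _).mpr rfl⟩⟩

/-- Δ₀ formula: `u` is a `k`-fold iterated singleton. -/
def isUpD0 : ∀ (k m : ℕ) {Γ : List NType}, Tm Γ (MT m) → Delta0 Γ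
  | 0, _, _, _ => .tru
  | _+1, 0, _, _ => .fls
  | k+1, m+1, _, u =>
      .ex u (.and (isUpD0 k m (.var .zero))
        (.all u.wk (eqD0 m (.var .zero) (.var (.succ .zero)))))

/-- Semantic predicate: `x` is a `k`-fold iterated singleton. -/
def InRangeUp : ∀ (k m : ℕ), Obj α (MT m) → Prop
  | 0, _, _ => True
  | _+1, 0, _ => False
  | k+1, m+1, u => ∃ w, (show Set _ from u) = {w} ∧ InRangeUp k m w

lemma isUpD0_sat : ∀ (k m : ℕ) {Γ : List NType} (ρ : Env α Γ) (u : Tm Γ (MT m)),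
    Delta0.sat ρ (isUpD0 k m u) ↔ InRangeUp k m (Tm.eval ρ u)
  | 0, m, _, ρ, u => by simp [isUpD0, InRangeUp, Delta0.sat]
  | k+1, 0, _, ρ, u => by simp [isUpD0, InRangeUp, Delta0.sat]
  | k+1, m+1, Γ, ρ, u => by
    have wk : ∀ (x : Obj α (MT m)) (r : Tm Γ (MT (m+1))),
        @Tm.eval α _ (Env.cons x ρ) (MT m).set (@Tm.wk Γ (MT m) (MT (m+1)) r) =
          @Tm.eval α Γ ρ (MT m).set r := fun x r => Tm.eval_wk x ρ r
    simp only [isUpD0, InRangeUp, Delta0.sat, Tm.eval, Tm.eval_wk, wk]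
    constructor
    · rintro ⟨w, hw, h1, h2⟩
      refine ⟨w, ?_, (isUpD0_sat k m _ _).mp h1⟩
      apply Set.eq_singleton_iff_unique_mem.mpr
      exact ⟨hw, fun y hy => (eqD0_sat m _ _ _).mp (h2 y hy)⟩
    · rintro ⟨w, hw, h⟩
      refine ⟨w, by erw [hw]; exact rfl, (isUpD0_sat k m _ _).mpr h, ?_⟩
      intro y hy
      erw [hw] at hy
      exact (eqD0_sat m _ _ _).mpr hy

lemma inRangeUp_upBy (k n : ℕ) (a : Obj α (MT n)) : InRangeUp k (n + k) (upBy k a) := by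
  induction k with
  | zero => trivial
  | succ k ih => exact ⟨upBy k a, rfl, ih⟩

lemma inRangeUp_exists : ∀ (k n : ℕ) (x : Obj α (MT (n + k))),
    InRangeUp k (n + k) x → ∃ a : Obj α (MT n), upBy k a = x
  | 0, n, x, _ => ⟨x, rfl⟩
  | k+1, n, x, h => by
    obtain ⟨w, hx, hw⟩ := h
    obtain ⟨a, rfl⟩ := inRangeUp_exists k n w hw
    exact ⟨a, hx.symm⟩

lemma upTo_eq_upBy (n k : ℕ) (h : n ≤ n + k) (a : Obj α (MT n)) :
    upTo (n + k) h a = upBy k a := by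
  have e : n + k - n = k := Nat.add_sub_cancel_left n k
  apply eq_of_heq
  refine HEq.trans (cast_heq _ _) ?_
  have key : ∀ j, j = k → HEq (upBy (α := α) (n := n) j a) (upBy k a) := by
    rintro j rfl; rfl
  exact key _ e

lemma inRangeUp_iff_upTo (n k m : ℕ) (e : n + k = m) (h : n ≤ m) (x : Obj α (MT m)) :
    InRangeUp k m x ↔ ∃ a : Obj α (MT n), upTo m h a = x := by
  subst e
  constructor
  · intro hx
    obtain ⟨a, ha⟩ := inRangeUp_exists k n x hx
    exact ⟨a, by rw [upTo_eq_upBy]; exact ha⟩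
  · rintro ⟨a, rfl⟩
    rw [upTo_eq_upBy]
    exact inRangeUp_upBy k n a

lemma upBy_inj : ∀ (k : ℕ) {n : ℕ} {a b : Obj α (MT n)}, upBy k a = upBy k b → a = b
  | 0, _, _, _, h => h
  | k+1, n, a, b, h => by
    apply upBy_inj k (n := n)
    have : ({upBy k a} : Set (Obj α (MT (n + k)))) = {upBy k b} := h
    exact Set.singleton_eq_singleton_iff.mp this

lemma upTo_inj {n m : ℕ} (h : n ≤ m) {a b : Obj α (MT n)}
    (e : upTo m h a = upTo m h b) : a = b := by
  obtain ⟨k, rfl⟩ := Nat.le.dest h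
  rw [upTo_eq_upBy, upTo_eq_upBy] at e
  exact upBy_inj k e

/-- A default object of each monadic type. -/
def dObj (α : Type) [Inhabited α] : ∀ n : ℕ, Obj α (MT n)
  | 0 => (default : α)
  | _+1 => (∅ : Set _)

lemma kPair_inj {n1 n2 : ℕ} {a a' : Obj α (MT n1)} {b b' : Obj α (MT n2)}
    (h : kPair a b = kPair a' b') : a = a' ∧ b = b' := by
  set u := upTo (max n1 n2) (le_max_left n1 n2) a with hu
  set v := upTo (max n1 n2) (le_max_right n1 n2) b with hv
  set u' := upTo (max n1 n2) (le_max_left n1 n2) a' with hu'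
  set v' := upTo (max n1 n2) (le_max_right n1 n2) b' with hv'
  have h' : ({ {u}, {u, v} } : Set (Set (Obj α (MT (max n1 n2))))) = { {u'}, {u', v'} } := h
  have huv : u = u' ∧ v = v' := by
    rcases Set.pair_eq_pair_iff.mp h' with ⟨h1, h2⟩ | ⟨h1, h2⟩
    · have e1 : u = u' := Set.singleton_eq_singleton_iff.mp h1
      rcases Set.pair_eq_pair_iff.mp h2 with ⟨_, e2⟩ | ⟨e2, e3⟩
      · exact ⟨e1, e2⟩
      · exact ⟨e1, e3.trans (e1.symm.trans e2)⟩
    · -- {u} = {u', v'} and {u, v} = {u'}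
      have hu'1 : u' ∈ ({u} : Set _) := h1 ▸ (by simp)
      have hv'1 : v' ∈ ({u} : Set _) := h1 ▸ (by simp)
      have hv1 : v ∈ ({u'} : Set _) := h2 ▸ (by simp)
      simp only [Set.mem_singleton_iff] at hu'1 hv'1 hv1
      exact ⟨hu'1.symm, by rw [hv1, hu'1, hv'1]⟩
  exact ⟨upTo_inj _ huv.1, upTo_inj _ huv.2⟩

@[simp] lemma Env.cons_zero {Γ : List NType} {t : NType} (x : Obj α t) (ρ : Env α Γ) :
    Env.cons x ρ t .zero = x := rfl

@[simp] lemma Env.cons_succ {Γ : List NType} {s t : NType} (x : Obj α s) (ρ : Env α Γ)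
    (v : Var Γ t) : Env.cons x ρ t (.succ v) = ρ t v := rfl

/-- The Δ₀ formula characterizing the image of Kuratowski pairing. -/
def imPairFml (m k1 k2 : ℕ) : Delta0 [MT (m+2)] :=
  .ex (.var .zero) <| .ex (.var (.succ .zero)) <|
  .ex (.var (.succ .zero)) <| .ex (.var (.succ .zero)) <|
    .and (.all (.var (.succ (.succ (.succ .zero))))
            (eqD0 m (.var .zero) (.var (.succ (.succ .zero))))) <|
    .and (.all (.var (.succ (.succ .zero)))
            (.or (eqD0 m (.var .zero) (.var (.succ (.succ .zero))))
                 (eqD0 m (.var .zero) (.var (.succ .zero))))) <|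
    .and (.ex (.var (.succ (.succ .zero)))
            (eqD0 m (.var .zero) (.var (.succ (.succ .zero))))) <|
    .and (.all (.var (.succ (.succ (.succ (.succ .zero)))))
            (.or (eqD0 (m+1) (.var .zero) (.var (.succ (.succ (.succ (.succ .zero))))))
                 (eqD0 (m+1) (.var .zero) (.var (.succ (.succ (.succ .zero))))))) <|
    .and (isUpD0 k1 m (.var (.succ .zero))) (isUpD0 k2 m (.var .zero))

lemma imPairFml_sat (m k1 k2 : ℕ) (x : Obj α (MT (m+2))) :
    Delta0.sat (Env.cons x Env.nil) (imPairFml m k1 k2) ↔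
    ∃ A ∈ (show Set (Set (Obj α (MT m))) from x), ∃ B ∈ (show Set (Set (Obj α (MT m))) from x),
      ∃ u ∈ A, ∃ v ∈ B,
      (∀ w ∈ A, w = u) ∧ (∀ w ∈ B, w = u ∨ w = v) ∧ (∃ w ∈ B, w = u) ∧
      (∀ C ∈ (show Set (Set (Obj α (MT m))) from x), C = A ∨ C = B) ∧
      InRangeUp k1 m u ∧ InRangeUp k2 m v := by
  have aux : ∀ (S T : Set (Obj α (MT m))),
      ((∀ y ∈ S, ∃ z ∈ T, z = y) ∧ ∀ y ∈ T, ∃ z ∈ S, z = y) ↔ S = T := by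
    intro S T
    constructor
    · rintro ⟨h1, h2⟩
      apply Set.Subset.antisymm
      · intro y hy; obtain ⟨z, hz, rfl⟩ := h1 y hy; exact hz
      · intro y hy; obtain ⟨z, hz, rfl⟩ := h2 y hy; exact hz
    · rintro rfl
      exact ⟨fun y hy => ⟨y, hy, rfl⟩, fun y hy => ⟨y, hy, rfl⟩⟩
  simp only [imPairFml, Delta0.sat, Tm.eval, Env.cons, eqD0_sat, isUpD0_sat, aux]
  exact Iff.rfl
end Aux

/-- There is a Δ₀-definable predicate `Im_Pair` on `U_{max n1 n2 + 2}`
characterizing the image of the Kuratowski pairing: `Im_Pair(a)` holds iff there exist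
`a1 : U_{n1}` and `a2 : U_{n2}` with `Pair(a1,a2) = a`; moreover in that case
`Pair(π̂1(a), π̂2(a)) = a` for the projection operations `π̂1, π̂2`. -/
theorem kuratowski_image_delta0 (n1 n2 : ℕ) :
    ∃ φ : Delta0 [MT (max n1 n2 + 2)],
      ∀ (α : Type) [Inhabited α],
        ∃ (p1 : Obj α (MT (max n1 n2 + 2)) → Obj α (MT n1))
          (p2 : Obj α (MT (max n1 n2 + 2)) → Obj α (MT n2)),
          (∀ (a : Obj α (MT n1)) (b : Obj α (MT n2)),
            p1 (kPair a b) = a ∧ p2 (kPair a b) = b) ∧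
          (∀ x : Obj α (MT (max n1 n2 + 2)),
            (Delta0.sat (Env.cons x Env.nil) φ ↔
              ∃ (a1 : Obj α (MT n1)) (a2 : Obj α (MT n2)), kPair a1 a2 = x)) ∧
          (∀ x : Obj α (MT (max n1 n2 + 2)),
            Delta0.sat (Env.cons x Env.nil) φ → kPair (p1 x) (p2 x) = x) := by
  classical
  obtain ⟨k1, hk1⟩ := Nat.le.dest (le_max_left n1 n2)
  obtain ⟨k2, hk2⟩ := Nat.le.dest (le_max_right n1 n2)
  refine ⟨imPairFml (max n1 n2) k1 k2, ?_⟩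
  intro α _
  have hiff : ∀ x : Obj α (MT (max n1 n2 + 2)),
      Delta0.sat (Env.cons x Env.nil) (imPairFml (max n1 n2) k1 k2) ↔
        ∃ (a1 : Obj α (MT n1)) (a2 : Obj α (MT n2)), kPair a1 a2 = x := by
    intro x
    rw [imPairFml_sat]
    constructor
    · rintro ⟨A, hAx, B, hBx, u, huA, v, hvB, hA1, hB1, ⟨u', hu'B, rfl⟩, hx1, hru, hrv⟩
      obtain ⟨a1, ha1⟩ := (inRangeUp_iff_upTo n1 k1 (max n1 n2) hk1 (le_max_left n1 n2) u').mp hru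
      obtain ⟨a2, ha2⟩ := (inRangeUp_iff_upTo n2 k2 (max n1 n2) hk2 (le_max_right n1 n2) v).mp hrv
      refine ⟨a1, a2, ?_⟩
      have hA : A = {u'} := Set.eq_singleton_iff_unique_mem.mpr ⟨huA, hA1⟩
      have hB : B = {u', v} := by
        apply Set.Subset.antisymm
        · intro w hw
          rcases hB1 w hw with h | h <;> simp [h]
        · intro w hw
          rcases hw with rfl | rfl
          · exact hu'B
          · exact hvB
      have hx : (show Set (Set (Obj α (MT (max n1 n2)))) from x) = {A, B} := by
        apply Set.Subset.antisymm
        · intro C hC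
          rcases hx1 C hC with h | h <;> simp [h]
        · intro C hC
          rcases hC with rfl | rfl
          · exact hAx
          · exact hBx
      show (show Set (Set (Obj α (MT (max n1 n2)))) from
        { {upTo (max n1 n2) (le_max_left n1 n2) a1},
          {upTo (max n1 n2) (le_max_left n1 n2) a1,
           upTo (max n1 n2) (le_max_right n1 n2) a2} }) = x
      rw [hA, hB] at hx
      rw [ha1, ha2]
      exact hx.symm
    · rintro ⟨a1, a2, rfl⟩
      set u := upTo (max n1 n2) (le_max_left n1 n2) a1 with hu
      set v := upTo (max n1 n2) (le_max_right n1 n2) a2 with hv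
      refine ⟨{u}, ?_, {u, v}, ?_, u, rfl, v, ?_, ?_, ?_, ⟨u, ?_, rfl⟩, ?_, ?_, ?_⟩
      · left; rfl
      · right; rfl
      · right; rfl
      · intro w hw; exact hw
      · intro w hw; exact hw
      · left; rfl
      · intro C hC; exact hC
      · exact (inRangeUp_iff_upTo n1 k1 (max n1 n2) hk1 (le_max_left n1 n2) u).mpr ⟨a1, rfl⟩
      · exact (inRangeUp_iff_upTo n2 k2 (max n1 n2) hk2 (le_max_right n1 n2) v).mpr ⟨a2, rfl⟩
  let Pex : Obj α (MT (max n1 n2 + 2)) → Prop := fun x =>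
    ∃ (a1 : Obj α (MT n1)) (a2 : Obj α (MT n2)), kPair a1 a2 = x
  refine ⟨fun x => if h : Pex x then h.choose else dObj α n1,
          fun x => if h : Pex x then h.choose_spec.choose else dObj α n2, ?_, hiff, ?_⟩
  · intro a b
    have h : Pex (kPair a b) := ⟨a, b, rfl⟩
    have hspec := h.choose_spec.choose_spec
    obtain ⟨e1, e2⟩ := kPair_inj hspec
    constructor <;> simp only [dif_pos h]
    · exact e1
    · exact e2
  · intro x hx
    have h : Pex x := (hiff x).mp hx
    simp only [dif_pos h]
    exact h.choose_spec.choose_spec
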